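/- arXiv:1210.3998 — 2 statements merged into one kernel-verified Lean document; each statement's English description precedes it below -/
import Mathlib

section
/- Let a be a nonzero real number, B > 0, and define D(ε,s) = -ε s² + i s + ε a for ε ∈ ℂ and s ∈ ℝ. Set c₀ = min{1/8, B/18, B/(8|a|), |a|/8, |a|B/4, √|a|/2}. Then there exists ε₁ > 0 such that for all s ∈ ℝ and all ε = x + iy ∈ ℂ with 0 < |ε| ≤ ε₁ and |x| ≥ B y², one has |D(ε,s)| ≥ c₀ · max{min{1, s²}, |ε|²}. -/
open Complex

private lemma aux_sq1 {r : ℝ} (h0 : 0 ≤ r) (h1 : r ≤ 1) : r^2 ≤ 1 := by nlinarith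

private lemma aux1 (B r X Y : ℝ) (hB : 0 < B) (hX : 0 ≤ X) (hXr : X ≤ r) (hrB : r ≤ 1/B)
    (hxy : B * Y^2 ≤ X) (hr2 : r^2 = X^2 + Y^2) : B * r^2 ≤ 2 * X := by
  have h1 : r * B ≤ 1 := by rw [le_div_iff₀ hB] at hrB; exact hrB
  nlinarith [mul_le_mul_of_nonneg_left hXr hX, hB.le]

private lemma aux2 (c aA B r X A : ℝ) (hc5 : c ≤ aA * B / 4) (hx : B * r^2 ≤ 2 * X)
    (h1 : aA/2 ≤ A) (hX : 0 ≤ X) (haA : 0 < aA) : c * r^2 ≤ X * A := by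
  have p1 : c * r^2 ≤ (aA * B / 4) * r^2 := mul_le_mul_of_nonneg_right hc5 (sq_nonneg r)
  have p2 : (B * r^2) * (aA/4) ≤ (2 * X) * (aA/4) :=
    mul_le_mul_of_nonneg_right hx (by positivity)
  have p3 : X * (aA/2) ≤ X * A := mul_le_mul_of_nonneg_left h1 hX
  nlinarith [p1, p2, p3]

private lemma aux3 (aA Y S : ℝ) (h : 2 * aA * Y ≤ S) : Y * (3 * aA / 2) ≤ 3 * S / 4 := by
  nlinarith

private lemma aux4 (c s : ℝ) (hc : c ≤ 1/8) (hcp : 0 ≤ c) : c * min 1 (s^2) ≤ |s|/4 := by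
  rcases le_total 1 (s^2) with h | h
  · rw [min_eq_left h]
    have h1 : 1 ≤ |s| := by nlinarith [_root_.sq_abs s, abs_nonneg s]
    linarith
  · rw [min_eq_right h]
    have h1 : |s| ≤ 1 := by nlinarith [_root_.sq_abs s, abs_nonneg s]
    nlinarith [_root_.sq_abs s, abs_nonneg s,
      mul_nonneg (by linarith : (0:ℝ) ≤ 1/8 - c) (sq_nonneg s),
      mul_nonneg (by linarith : (0:ℝ) ≤ 1 - |s|) (abs_nonneg s)]

private lemma aux5 (aA Y S : ℝ) (hY : 0 ≤ Y) (haA : 0 ≤ aA) (hS : 0 ≤ S)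
    (h : S ≤ 2 * aA * Y) : S^2 ≤ 4 * aA^2 * Y^2 := by nlinarith

private lemma aux6 (c aA B X A s2 Y : ℝ) (hsq : s2 ≤ 4 * aA^2 * Y^2)
    (hcB : c * (8 * aA) ≤ B) (hxy : B * Y^2 ≤ X) (h1 : aA/2 ≤ A)
    (hX : 0 ≤ X) (hc : 0 ≤ c) (haA : 0 < aA) : c * s2 ≤ X * A := by
  have p1 : c * s2 ≤ c * (4 * aA^2 * Y^2) := mul_le_mul_of_nonneg_left hsq hc
  have p2 : (c * (8 * aA)) * (aA * Y^2) ≤ B * (aA * Y^2) :=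
    mul_le_mul_of_nonneg_right hcB (by positivity)
  have p3 : (B * Y^2) * (aA/2) ≤ X * (aA/2) :=
    mul_le_mul_of_nonneg_right hxy (by positivity)
  have p4 : X * (aA/2) ≤ X * A := mul_le_mul_of_nonneg_left h1 hX
  nlinarith [p1, p2, p3, p4]

private lemma aux_t (c t aA : ℝ) (haA : 0 < aA) (ht0 : 0 < t) (ht2 : t^2 = aA/2)
    (hc1 : c ≤ 1/8) (hc4 : c ≤ aA/8) (hcp : 0 < c) : c ≤ t/2 := by
  nlinarith [ht2, mul_pos ht0 ht0, mul_nonneg hcp.le hcp.le]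

private lemma aux7 (S Y : ℝ) (hS : 0 < S) (hY : 0 ≤ Y) (h : S/2 ≤ Y * (3 * S^2 / 2)) :
    1 ≤ 9 * S^2 * Y^2 := by
  have h1 : 1 ≤ 3 * Y * S := by nlinarith [mul_pos hS hS]
  nlinarith [h1, mul_nonneg hY hS.le]

private lemma aux8 (B X A S2 Y : ℝ) (hB : 0 < B) (h1 : B * Y^2 ≤ X) (hA : S2/2 ≤ A)
    (h9 : 1 ≤ 9 * S2 * Y^2) (hX : 0 ≤ X) (hS2 : 0 ≤ S2) : B/18 ≤ X * A := by
  have p1 : (B * Y^2) * (S2/2) ≤ X * A :=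
    mul_le_mul h1 hA (by positivity) hX
  have p2 : (B/18) * 1 ≤ (B/18) * (9 * S2 * Y^2) :=
    mul_le_mul_of_nonneg_left h9 (by positivity)
  nlinarith [p1, p2, mul_nonneg (mul_nonneg hB.le (sq_nonneg Y)) hS2]

set_option maxHeartbeats 1000000 in
theorem stmt0 (a : ℝ) (ha : a ≠ 0) (B : ℝ) (hB : 0 < B)
    (c₀ : ℝ)
    (hc₀ : c₀ = min (1/8) (min (B/18) (min (B/(8 * |a|)) (min (|a| / 8) (min (|a| * B/4) (Real.sqrt |a| / 2)))))) :
    ∃ ε₁ > 0, ∀ (s : ℝ) (ε : ℂ), 0 < ‖ε‖ → ‖ε‖ ≤ ε₁ → |ε.re| ≥ B * ε.im ^ 2 →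
      ‖-ε * (s:ℂ)^2 + Complex.I * (s:ℂ) + ε * (a:ℂ)‖ ≥
        c₀ * max (min 1 (s^2)) (‖ε‖^2) := by
  have ha' : 0 < |a| := abs_pos.mpr ha
  set t := Real.sqrt (|a|/2) with ht
  have ht0 : 0 < t := Real.sqrt_pos.mpr (by positivity)
  have ht2 : t^2 = |a|/2 := Real.sq_sqrt (by positivity)
  -- c₀ bounds
  have hc₀pos : 0 < c₀ := by
    rw [hc₀]
    have h6 : (0:ℝ) < Real.sqrt |a| / 2 := by positivity
    simp only [lt_min_iff]
    refine ⟨by norm_num, by positivity, by positivity, by positivity, by positivity, h6⟩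
  have hc1 : c₀ ≤ 1/8 := by rw [hc₀]; exact min_le_left _ _
  have hc2 : c₀ ≤ B/18 := by rw [hc₀]; exact le_trans (min_le_right _ _) (min_le_left _ _)
  have hc3 : c₀ ≤ B/(8 * |a|) := by
    rw [hc₀]
    exact le_trans (min_le_right _ _) (le_trans (min_le_right _ _) (min_le_left _ _))
  have hc4 : c₀ ≤ |a|/8 := by
    rw [hc₀]
    exact le_trans (min_le_right _ _) (le_trans (min_le_right _ _)
      (le_trans (min_le_right _ _) (min_le_left _ _)))
  have hc5 : c₀ ≤ |a| * B/4 := by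
    rw [hc₀]
    exact le_trans (min_le_right _ _) (le_trans (min_le_right _ _)
      (le_trans (min_le_right _ _) (le_trans (min_le_right _ _) (min_le_left _ _))))
  refine ⟨min (min 1 (1/B)) (t/(12 * |a|)), by positivity, ?_⟩
  intro s ε hε0 hε1 hxy
  set r := ‖ε‖ with hrdef
  set x := ε.re with hxdef
  set y := ε.im with hydef
  have hxr : |x| ≤ r := Complex.abs_re_le_norm ε
  have hyr : |y| ≤ r := Complex.abs_im_le_norm ε
  have hr2 : r^2 = |x|^2 + |y|^2 := by
    rw [hrdef, Complex.sq_norm, Complex.normSq_apply,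
      _root_.sq_abs, _root_.sq_abs]
    ring
  have hr1 : r ≤ 1 := le_trans hε1 (le_trans (min_le_left _ _) (min_le_left _ _))
  have hrB : r ≤ 1/B := le_trans hε1 (le_trans (min_le_left _ _) (min_le_right _ _))
  have hrt : r ≤ t/(12 * |a|) := le_trans hε1 (min_le_right _ _)
  set D : ℂ := -ε * (s:ℂ)^2 + Complex.I * (s:ℂ) + ε * (a:ℂ) with hDdef
  have hre : D.re = x * (a - s^2) := by
    rw [hDdef]
    simp [← Complex.ofReal_pow, Complex.add_re, Complex.mul_re, Complex.mul_im]; ring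
  have him : D.im = y * (a - s^2) + s := by
    rw [hDdef]
    simp [← Complex.ofReal_pow, Complex.add_im, Complex.mul_re, Complex.mul_im]; ring
  have hDre : |x| * |a - s^2| ≤ ‖D‖ := by
    rw [← abs_mul]; exact hre ▸ Complex.abs_re_le_norm D
  have hDim : |y * (a - s^2) + s| ≤ ‖D‖ := him ▸ Complex.abs_im_le_norm D
  have hxy' : B * |y|^2 ≤ |x| := by rwa [_root_.sq_abs]
  rw [ge_iff_le]
  by_cases hs : s^2 ≤ |a|/2
  · -- Case I : s² ≤ |a|/2, so |a - s²| ≥ |a|/2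
    have h1 : |a|/2 ≤ |a - s^2| := by
      have h := abs_sub_abs_le_abs_sub a (s^2)
      rw [_root_.abs_of_nonneg (sq_nonneg s)] at h
      linarith
    rcases le_total (s^2) (r^2) with h | h
    · -- I.a : max = r²
      have hmax : max (min 1 (s^2)) (r^2) = r^2 :=
        max_eq_right (le_trans (min_le_right _ _) h)
      rw [hmax]
      have hx : B * r^2 ≤ 2 * |x| :=
        aux1 B r |x| |y| hB (abs_nonneg x) hxr hrB hxy' hr2
      exact le_trans (aux2 c₀ |a| B r |x| |a - s^2| hc5 hx h1 (abs_nonneg x) ha') hDre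
    · -- I.b : r² ≤ s², max = min 1 s²
      have hmax : max (min 1 (s^2)) (r^2) = min 1 (s^2) :=
        max_eq_left (le_min (aux_sq1 (norm_nonneg ε) hr1) h)
      rw [hmax]
      have h2 : |a - s^2| ≤ 3 * |a|/2 := by
        have h := abs_sub a (s^2)
        rw [_root_.abs_of_nonneg (sq_nonneg s)] at h
        linarith
      rcases le_total (2 * |a| * |y|) (|s|) with hy | hy
      · -- Im bound
        have him1 : |y * (a - s^2)| ≤ 3 * |s|/4 := by
          rw [abs_mul]
          calc |y| * |a - s^2| ≤ |y| * (3 * |a|/2) :=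
                mul_le_mul_of_nonneg_left h2 (abs_nonneg y)
            _ ≤ 3 * |s|/4 := aux3 |a| |y| |s| hy
        have him2 : |s|/4 ≤ |y * (a - s^2) + s| := by
          have h := abs_sub_abs_le_abs_sub s (y * (a - s^2) + s)
          have heq : |s - (y * (a - s^2) + s)| = |y * (a - s^2)| := by
            rw [show s - (y * (a - s^2) + s) = -(y * (a - s^2)) by ring, abs_neg]
          rw [heq] at h
          linarith
        have hfin : c₀ * min 1 (s^2) ≤ |s|/4 := aux4 c₀ s hc1 hc₀pos.le
        linarith
      · -- Re bound
        have hsq : s^2 ≤ 4 * |a|^2 * |y|^2 := by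
          have h5 := aux5 |a| |y| |s| (abs_nonneg y) ha'.le (abs_nonneg s) hy
          rwa [_root_.sq_abs] at h5
        have hcB : c₀ * (8 * |a|) ≤ B := by
          rw [div_eq_mul_inv] at hc3
          calc c₀ * (8 * |a|) ≤ (B * (8 * |a|)⁻¹) * (8 * |a|) :=
                mul_le_mul_of_nonneg_right hc3 (by positivity)
            _ = B := by field_simp
        have key : c₀ * s^2 ≤ |x| * |a - s^2| :=
          aux6 c₀ |a| B |x| |a - s^2| (s^2) |y| hsq hcB hxy' h1 (abs_nonneg x) hc₀pos.le ha'
        calc c₀ * min 1 (s^2) ≤ c₀ * s^2 :=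
              mul_le_mul_of_nonneg_left (min_le_right _ _) hc₀pos.le
          _ ≤ |x| * |a - s^2| := key
          _ ≤ ‖D‖ := hDre
  · -- Case II : s² > |a|/2
    push_neg at hs
    have hst : t ≤ |s| := by
      have h := Real.sqrt_le_sqrt (by linarith : |a|/2 ≤ s^2)
      rwa [Real.sqrt_sq_eq_abs, ← ht] at h
    have hmax1 : max (min 1 (s^2)) (r^2) ≤ 1 :=
      max_le (min_le_left _ _) (aux_sq1 (norm_nonneg ε) hr1)
    have hred : c₀ * max (min 1 (s^2)) (r^2) ≤ c₀ :=
      (mul_le_mul_of_nonneg_left hmax1 hc₀pos.le).trans_eq (mul_one c₀)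
    suffices hD : c₀ ≤ ‖D‖ by linarith
    rcases le_total (|y * (a - s^2)|) (|s|/2) with hy | hy
    · -- Im bound : |Im D| ≥ |s|/2 ≥ t/2 ≥ c₀
      have him2 : |s|/2 ≤ |y * (a - s^2) + s| := by
        have h := abs_sub_abs_le_abs_sub s (y * (a - s^2) + s)
        have heq : |s - (y * (a - s^2) + s)| = |y * (a - s^2)| := by
          rw [show s - (y * (a - s^2) + s) = -(y * (a - s^2)) by ring, abs_neg]
        rw [heq] at h
        linarith
      have hc : c₀ ≤ t/2 := aux_t c₀ t |a| ha' ht0 ht2 hc1 hc4 hc₀pos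
      linarith
    · have hyA : |s|/2 ≤ r * |a - s^2| := by
        calc |s|/2 ≤ |y * (a - s^2)| := hy
          _ = |y| * |a - s^2| := abs_mul _ _
          _ ≤ r * |a - s^2| := mul_le_mul_of_nonneg_right hyr (abs_nonneg _)
      rcases le_total (s^2) (2 * |a|) with hs2 | hs2
      · -- contradiction with smallness of r
        exfalso
        have h3 : |a - s^2| ≤ 3 * |a| := by
          have h := abs_sub a (s^2)
          rw [_root_.abs_of_nonneg (sq_nonneg s)] at h
          linarith
        have h4 : r * |a - s^2| ≤ (t/(12 * |a|)) * (3 * |a|) :=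
          mul_le_mul hrt h3 (abs_nonneg _) (by positivity)
        have heq : (t/(12 * |a|)) * (3 * |a|) = t/4 := by field_simp; ring
        rw [heq] at h4
        linarith
      · -- s² ≥ 2|a| : Re bound gives B/18
        have hs0 : 0 < |s| := lt_of_lt_of_le ht0 hst
        have hA1 : s^2/2 ≤ |a - s^2| := by
          have h := abs_sub_abs_le_abs_sub (s^2) a
          rw [_root_.abs_of_nonneg (sq_nonneg s), abs_sub_comm] at h
          linarith
        have hA2 : |a - s^2| ≤ 3 * s^2/2 := by
          have h := abs_sub a (s^2)
          rw [_root_.abs_of_nonneg (sq_nonneg s)] at h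
          linarith
        have hy9 : 1 ≤ 9 * |s|^2 * |y|^2 := by
          apply aux7 |s| |y| hs0 (abs_nonneg y)
          rw [_root_.sq_abs]
          calc |s|/2 ≤ |y| * |a - s^2| := by rw [← abs_mul]; exact hy
            _ ≤ |y| * (3 * s^2/2) := mul_le_mul_of_nonneg_left hA2 (abs_nonneg y)
        have hy9' : 1 ≤ 9 * s^2 * |y|^2 := by rwa [_root_.sq_abs] at hy9
        have key : B/18 ≤ |x| * |a - s^2| :=
          aux8 B |x| |a - s^2| (s^2) |y| hB hxy' hA1 hy9' (abs_nonneg x) (sq_nonneg s)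
        calc c₀ ≤ B/18 := hc2
          _ ≤ |x| * |a - s^2| := key
          _ ≤ ‖D‖ := hDre
end

section
/- Consider labelled rooted trees θ where each internal node v has p_v ≥ 2 children, each internal node carries a degree label d_v ∈ {0,1}, and lines carry momenta in ℤ^d determined as sums of the modes of end nodes below them. Let E(θ) be the set of end nodes (leaves), V(θ) the internal nodes, L₀(θ) a subset of the lines exiting degree-1 internal nodes defined by excluding the 'resonant' lines L₁(θ) (at least one line per node in V̄₁(θ), the degree-1 internal nodes whose children are all leaves with nonzero exiting momentum, or with exactly one leaf child and one non-leaf child with both incident momenta nonzero). Then 4|L₀(θ)| ≤ 3|E(θ)| − 4. -/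
/-- Labelled rooted trees: an end node (leaf) carries a mode label `ν ∈ ℤ^d`;
an internal node carries a degree label `d_v ∈ {0,1}` (encoded as a `Bool`,
`true` meaning `d_v = 1`) and a list of subtrees. -/
inductive LTree (d : ℕ) where
  | leaf : (Fin d → ℤ) → LTree d
  | node : Bool → List (LTree d) → LTree d

namespace LTree

variable {d : ℕ}

/-- `t` is an end node. -/
def isLeaf : LTree d → Prop
  | .leaf _ => True
  | .node _ _ => False

/-- Momentum of the line exiting a subtree: the sum of the mode labels of the
end nodes of the subtree. -/
def mom : LTree d → (Fin d → ℤ)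
  | .leaf ν => ν
  | .node _ [] => 0
  | .node b (t :: ts) => mom t + mom (.node b ts)

/-- Number of end nodes of a labelled tree. -/
def numLeaves : LTree d → ℕ
  | .leaf _ => 1
  | .node _ [] => 0
  | .node b (t :: ts) => numLeaves t + numLeaves (.node b ts)

/-- Subtree at a position (a list of child indices); a line of the tree is
identified with the position of the node it exits. -/
def sub? : LTree d → List ℕ → Option (LTree d)
  | t, [] => some t
  | .leaf _, _ :: _ => none
  | .node _ ts, i :: p =>
      match ts[i]? with
      | some t => sub? t p
      | none => none

/-- Well-formedness: every mode label is nonzero, every internal node has at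
least two children, and a line exiting an internal node with degree label `0`
has zero momentum. -/
def wf : LTree d → Prop
  | .leaf ν => ν ≠ 0
  | .node b ts => 2 ≤ ts.length ∧ (b = false → mom (.node b ts) = 0) ∧
      ∀ t ∈ ts.attach, wf t.1
decreasing_by
  have := List.sizeOf_lt_of_mem t.2
  simp at this ⊢
  omega

end LTree


namespace LTree

variable {d : ℕ}

/-- Boolean version of `isLeaf`. -/
def isLeafB : LTree d → Bool
  | .leaf _ => true
  | .node _ _ => false

lemma isLeaf_iff {t : LTree d} : t.isLeaf ↔ t.isLeafB = true := by
  cases t <;> simp [isLeaf, isLeafB]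

lemma numLeaves_of_isLeafB {t : LTree d} (h : t.isLeafB = true) : t.numLeaves = 1 := by
  cases t with
  | leaf ν => simp [numLeaves]
  | node b ts => simp [isLeafB] at h

lemma wf_node {b : Bool} {ts : List (LTree d)} (h : wf (.node b ts)) :
    2 ≤ ts.length ∧ ∀ t ∈ ts, wf t := by
  rw [wf] at h
  exact ⟨h.1, fun t ht => h.2.2 ⟨t, ht⟩ (List.mem_attach _ _)⟩

lemma numLeaves_pos : ∀ (t : LTree d), wf t → 0 < t.numLeaves
  | .leaf _, _ => by simp [numLeaves]
  | .node b [], h => by rw [wf] at h; simp at h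
  | .node b (t :: ts), h => by
      have h1 : wf t := (wf_node h).2 t (by simp)
      have := numLeaves_pos t h1
      simp only [numLeaves]
      omega
decreasing_by
  simp
  omega

lemma sub?_cons {b : Bool} {ts : List (LTree d)} {i : ℕ} {u : LTree d}
    (h : ts[i]? = some u) (q : List ℕ) :
    sub? (.node b ts) (i :: q) = sub? u q := by
  have h' : ts[i]? = some u := h
  simp [sub?, h']

lemma sub?_cons_none {b : Bool} {ts : List (LTree d)} {i : ℕ}
    (h : ts[i]? = none) (q : List ℕ) :
    sub? (.node b ts) (i :: q) = none := by
  have h' : ts[i]? = none := h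
  simp [sub?, h']

lemma numLeaves_node {b : Bool} : ∀ (ts : List (LTree d)),
    numLeaves (.node b ts) = (ts.map numLeaves).sum
  | [] => by simp [numLeaves]
  | t :: ts => by
      simp only [numLeaves, List.map_cons, List.sum_cons, numLeaves_node ts]

lemma numLeaves_node_fin {b : Bool} (ts : List (LTree d)) :
    numLeaves (.node b ts) = ∑ i : Fin ts.length, numLeaves (ts.get i) := by
  rw [numLeaves_node, ← List.ofFn_getElem_eq_map, List.sum_ofFn]
  rfl

end LTree


private lemma LTree.main_bound {d : ℕ} : ∀ (N : ℕ) (t : LTree d), t.numLeaves ≤ N → t.wf → ¬ t.isLeaf →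
    ∀ (L : Finset (List ℕ)),
    (∀ p ∈ L, ∃ ts : List (LTree d),
      LTree.sub? t p = some (LTree.node true ts) ∧ LTree.mom (LTree.node true ts) ≠ 0) →
    (∀ (p : List ℕ) (ts : List (LTree d)),
      LTree.sub? t p = some (LTree.node true ts) →
      (∀ u ∈ ts, LTree.isLeaf u) →
      LTree.mom (LTree.node true ts) ≠ 0 → p ∉ L) →
    (∀ (p : List ℕ) (ts : List (LTree d)) (i : ℕ) (u : LTree d),
      LTree.sub? t p = some (LTree.node true ts) →
      ts.length = 2 →
      ts[i]? = some u → ¬ LTree.isLeaf u →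
      (∀ (j : ℕ) (t' : LTree d), j ≠ i → ts[j]? = some t' → LTree.isLeaf t') →
      LTree.mom (LTree.node true ts) ≠ 0 → LTree.mom u ≠ 0 →
      ¬ (p ∈ L ∧ p ++ [i] ∈ L)) →
    4 * L.card + 4 ≤ 3 * t.numLeaves ∧ (([] : List ℕ) ∉ L → 4 * L.card + 5 ≤ 3 * t.numLeaves) := by
  intro N
  induction N with
  | zero =>
    intro t hN hwf _ L _ _ _
    exact absurd hN (by have := LTree.numLeaves_pos t hwf; omega)
  | succ N IH =>
    intro t hN hwf hroot L hmem hV2 hV3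
    cases t with
    | leaf ν => exact absurd trivial hroot
    | node b ts =>
    clear hroot
    have hlen := (LTree.wf_node hwf).1
    have hwfc := (LTree.wf_node hwf).2
    -- the set of lines inside the subtree rooted at child `i`
    set childL : ℕ → Finset (List ℕ) := fun i =>
      (L.filter (fun p => p.head? = some i)).image List.tail with hchildL
    have mem_childL : ∀ (i : ℕ) (q : List ℕ), q ∈ childL i ↔ (i :: q) ∈ L := by
      intro i q
      constructor
      · intro hq
        simp only [hchildL, Finset.mem_image, Finset.mem_filter] at hq
        obtain ⟨p, ⟨hpL, hhead⟩, htail⟩ := hq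
        cases p with
        | nil => simp at hhead
        | cons a p' =>
          simp only [List.head?_cons, Option.some.injEq] at hhead
          simp only [List.tail_cons] at htail
          rw [← hhead, ← htail]
          exact hpL
      · intro h
        simp only [hchildL, Finset.mem_image, Finset.mem_filter]
        exact ⟨i :: q, ⟨h, rfl⟩, rfl⟩
    have hget_some : ∀ i : Fin ts.length, ts[(i : ℕ)]? = some (ts.get i) :=
      fun i => List.getElem?_eq_getElem i.isLt
    have hL_shape : ∀ (j : ℕ) (q : List ℕ), (j :: q) ∈ L → ∃ hj : j < ts.length,
        ∃ tss : List (LTree d), LTree.sub? (ts.get ⟨j, hj⟩) q = some (LTree.node true tss) ∧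
          LTree.mom (LTree.node true tss) ≠ 0 := by
      intro j q hjq
      obtain ⟨tss, hsub, hmom⟩ := hmem _ hjq
      rcases hget : ts[j]? with _ | u
      · rw [LTree.sub?_cons_none hget] at hsub
        exact absurd hsub (by simp)
      · obtain ⟨hj, hu⟩ := List.getElem?_eq_some_iff.mp hget
        rw [LTree.sub?_cons hget] at hsub
        exact ⟨hj, tss, by rw [show ts.get ⟨j, hj⟩ = u from hu]; exact hsub, hmom⟩
    -- leaf children have no lines
    have hleafchild : ∀ i : Fin ts.length, (ts.get i).isLeafB = true → childL (i : ℕ) = ∅ := by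
      intro i hi
      rw [Finset.eq_empty_iff_forall_notMem]
      intro q hq
      rw [mem_childL] at hq
      obtain ⟨hj, tss, hsub, _⟩ := hL_shape _ _ hq
      rw [show (⟨(i : ℕ), hj⟩ : Fin ts.length) = i from rfl] at hsub
      cases hti : ts.get i with
      | leaf ν =>
        rw [hti] at hsub
        cases q with
        | nil => simp [LTree.sub?] at hsub
        | cons a q' => simp [LTree.sub?] at hsub
      | node b' ts' => rw [hti] at hi; simp [LTree.isLeafB] at hi
    -- internal children: apply the induction hypothesis
    have hint : ∀ i : Fin ts.length, (ts.get i).isLeafB = false →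
        (4 * (childL (i : ℕ)).card + 4 ≤ 3 * (ts.get i).numLeaves ∧
         (([] : List ℕ) ∉ childL (i : ℕ) →
           4 * (childL (i : ℕ)).card + 5 ≤ 3 * (ts.get i).numLeaves)) := by
      intro i hi
      have hwi : (ts.get i).wf := hwfc _ (ts.get_mem i)
      apply IH
      · -- size decreases
        have hsum := LTree.numLeaves_node_fin (b := b) ts
        have hpos : ∀ j : Fin ts.length, 0 < (ts.get j).numLeaves :=
          fun j => LTree.numLeaves_pos _ (hwfc _ (ts.get_mem j))
        have h2 : 2 ≤ ts.length := hlen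
        obtain ⟨j, -, hji⟩ := Finset.exists_mem_ne
          (s := (Finset.univ : Finset (Fin ts.length)))
          (by rw [Finset.card_univ, Fintype.card_fin]; omega) i
        have hij : i ≠ j := hji.symm
        have hpair : (ts.get i).numLeaves + (ts.get j).numLeaves
            ≤ ∑ k : Fin ts.length, (ts.get k).numLeaves := by
          have hle := Finset.sum_le_sum_of_subset
            (f := fun k => (ts.get k).numLeaves)
            (Finset.subset_univ ({i, j} : Finset (Fin ts.length)))
          rw [Finset.sum_pair hij] at hle
          exact hle
        have := hpos j
        omega
      · exact hwi
      · cases hti : ts.get i with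
        | leaf ν => rw [hti] at hi; simp [LTree.isLeafB] at hi
        | node b' ts' => simp [LTree.isLeaf]
      · intro q hq
        rw [mem_childL] at hq
        obtain ⟨hj, tss, hsub, hmom⟩ := hL_shape _ _ hq
        exact ⟨tss, hsub, hmom⟩
      · intro q tss hsub hleaves hmom hq
        rw [mem_childL] at hq
        exact hV2 ((i : ℕ) :: q) tss
          (by rw [LTree.sub?_cons (hget_some i)]; exact hsub) hleaves hmom hq
      · intro q tss j u hsub hlen2 hgetj hnleaf hothers hmom1 hmom2 hpq
        obtain ⟨h1, h2⟩ := hpq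
        rw [mem_childL] at h1 h2
        exact hV3 ((i : ℕ) :: q) tss j u
          (by rw [LTree.sub?_cons (hget_some i)]; exact hsub) hlen2 hgetj hnleaf hothers
          hmom1 hmom2 ⟨h1, h2⟩
    -- partition of the children
    set P : Fin ts.length → Prop := fun i => (ts.get i).isLeafB = true with hP
    set Sint : Finset (Fin ts.length) := Finset.univ.filter (fun i => ¬ P i) with hSint
    set s : ℕ := (Finset.univ.filter P).card with hs
    set m : ℕ := Sint.card with hm
    set C : ℕ := ∑ i ∈ Sint, (childL (i : ℕ)).card with hC
    set D : ℕ := ∑ i ∈ Sint, (ts.get i).numLeaves with hD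
    have hms : s + m = ts.length := by
      rw [hs, hm, hSint, Finset.card_filter_add_card_filter_not, Finset.card_univ,
        Fintype.card_fin]
    have hEsplit : LTree.numLeaves (.node b ts) = s + D := by
      rw [LTree.numLeaves_node_fin,
        ← Finset.sum_filter_add_sum_filter_not Finset.univ P (fun i => (ts.get i).numLeaves)]
      congr 1
      rw [Finset.sum_congr rfl
        (fun i hi => LTree.numLeaves_of_isLeafB (Finset.mem_filter.mp hi).2),
        Finset.sum_const, smul_eq_mul, mul_one]
    have hCsplit : ∑ i : Fin ts.length, (childL (i : ℕ)).card = C := by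
      rw [← Finset.sum_filter_add_sum_filter_not Finset.univ P (fun i => (childL (i : ℕ)).card)]
      have : ∑ i ∈ Finset.univ.filter P, (childL (i : ℕ)).card = 0 :=
        Finset.sum_eq_zero fun i hi => by
          rw [hleafchild i (Finset.mem_filter.mp hi).2]; rfl
      rw [this, zero_add]
    have hsum_bound : 4 * C + 4 * m ≤ 3 * D := by
      have h1 : ∑ i ∈ Sint, (4 * (childL (i : ℕ)).card + 4) ≤
          ∑ i ∈ Sint, 3 * (ts.get i).numLeaves := by
        refine Finset.sum_le_sum fun i hi => ?_
        have hi' : (ts.get i).isLeafB = false := by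
          have := (Finset.mem_filter.mp hi).2
          rw [hP] at this
          simpa using this
        exact (hint i hi').1
      have e1 : ∑ i ∈ Sint, (4 * (childL (i : ℕ)).card + 4) = 4 * C + 4 * m := by
        rw [Finset.sum_add_distrib, ← Finset.mul_sum, ← hC, Finset.sum_const, smul_eq_mul, ← hm]
        ring
      have e2 : ∑ i ∈ Sint, 3 * (ts.get i).numLeaves = 3 * D := by
        rw [← Finset.mul_sum, ← hD]
      rw [e1, e2] at h1
      exact h1
    have hzero : m = 0 → (([] : List ℕ) ∉ L) ∧ C = 0 ∧ D = 0 := by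
      intro hm0
      have hSe : Sint = ∅ := Finset.card_eq_zero.mp hm0
      have hallP : ∀ i : Fin ts.length, P i := by
        intro i
        by_contra hPi
        have : i ∈ Sint := by rw [hSint]; exact Finset.mem_filter.mpr ⟨Finset.mem_univ _, hPi⟩
        rw [hSe] at this
        exact absurd this (Finset.notMem_empty _)
      refine ⟨?_, by rw [hC, hSe]; rfl, by rw [hD, hSe]; rfl⟩
      intro h0
      obtain ⟨tss, hsub, hmom⟩ := hmem [] h0
      rw [LTree.sub?] at hsub
      injection Option.some.inj hsub with hb hts
      subst hb
      subst hts
      refine hV2 [] ts (by rw [LTree.sub?]) ?_ hmom h0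
      intro u hu
      obtain ⟨i, hi⟩ := List.mem_iff_get.mp hu
      rw [← hi]
      exact LTree.isLeaf_iff.mpr (hallP i)
    by_cases h0 : ([] : List ℕ) ∈ L
    · -- the root line is in L
      have hcard : L.card ≤ 1 + C := by
        have hsubset : L ⊆ insert [] (Finset.univ.biUnion
            fun i : Fin ts.length => (childL (i : ℕ)).image ((i : ℕ) :: ·)) := by
          intro p hp
          cases p with
          | nil => exact Finset.mem_insert_self _ _
          | cons j q =>
            obtain ⟨hj, -⟩ := hL_shape j q hp
            refine Finset.mem_insert_of_mem (Finset.mem_biUnion.mpr ⟨⟨j, hj⟩, Finset.mem_univ _,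
              Finset.mem_image.mpr ⟨q, (mem_childL j q).mpr hp, rfl⟩⟩)
        calc L.card ≤ _ := Finset.card_le_card hsubset
          _ ≤ _ + 1 := Finset.card_insert_le _ _
          _ ≤ (∑ i : Fin ts.length, ((childL (i : ℕ)).image ((i : ℕ) :: ·)).card) + 1 :=
            Nat.add_le_add_right (Finset.card_biUnion_le) 1
          _ ≤ (∑ i : Fin ts.length, (childL (i : ℕ)).card) + 1 :=
            Nat.add_le_add_right (Finset.sum_le_sum fun i _ => Finset.card_image_le) 1
          _ = 1 + C := by rw [hCsplit, Nat.add_comm]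
      constructor
      swap
      · intro h; exact absurd h0 h
      -- main inequality
      have hm1 : 1 ≤ m := by
        by_contra hmc
        have hm0 : m = 0 := by omega
        exact (hzero hm0).1 h0
      by_cases hhard : m = 1 ∧ s ≤ 1
      · -- hard case : m = 1, s = 1
        obtain ⟨hm1', hs1⟩ := hhard
        obtain ⟨i₀, hi₀⟩ := Finset.card_eq_one.mp hm1'
        have hi₀int : (ts.get i₀).isLeafB = false := by
          have : i₀ ∈ Sint := by rw [hi₀]; exact Finset.mem_singleton_self _
          have := (Finset.mem_filter.mp (by rw [hSint] at this; exact this)).2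
          rw [hP] at this; simpa using this
        have hCeq : C = (childL (i₀ : ℕ)).card := by rw [hC, hi₀, Finset.sum_singleton]
        have hDeq : D = (ts.get i₀).numLeaves := by rw [hD, hi₀, Finset.sum_singleton]
        -- the root is of the form node true ts with nonzero momentum
        obtain ⟨tss, hsub, hmom⟩ := hmem [] h0
        rw [LTree.sub?] at hsub
        injection Option.some.inj hsub with hb hts
        subst hb
        subst hts
        -- the other children are leaves
        have hothers : ∀ (j : ℕ) (t' : LTree d), j ≠ (i₀ : ℕ) → ts[j]? = some t' →
            LTree.isLeaf t' := by
          intro j t' hji hjt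
          obtain ⟨hj, hu⟩ := List.getElem?_eq_some_iff.mp hjt
          have hjS : (⟨j, hj⟩ : Fin ts.length) ∉ Sint := by
            rw [hi₀, Finset.mem_singleton]
            intro h
            exact hji (congrArg Fin.val h)
          have : P ⟨j, hj⟩ := by
            by_contra hPj
            exact hjS (by rw [hSint]; exact Finset.mem_filter.mpr ⟨Finset.mem_univ _, hPj⟩)
          rw [hP] at this
          rw [← hu]
          exact LTree.isLeaf_iff.mpr this
        -- the line entering the root from the internal child is not in L
        have hnotin : ((i₀ : ℕ) :: []) ∉ L := by
          intro hin
          obtain ⟨hj, tss', hsub', hmom'⟩ := hL_shape _ _ hin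
          rw [show (⟨(i₀ : ℕ), hj⟩ : Fin ts.length) = i₀ from rfl, LTree.sub?] at hsub'
          have hti₀ : ts.get i₀ = LTree.node true tss' := Option.some.inj hsub'
          have hlen2 : ts.length = 2 := by omega
          have hnl : ¬ LTree.isLeaf (ts.get i₀) := by
            rw [hti₀]; simp [LTree.isLeaf]
          refine hV3 [] ts (i₀ : ℕ) (ts.get i₀) (by rw [LTree.sub?]) hlen2 (hget_some i₀)
            hnl hothers hmom ?_ ⟨h0, by simpa using hin⟩
          rw [hti₀]
          exact hmom'
        have hni : ([] : List ℕ) ∉ childL (i₀ : ℕ) := by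
          rw [mem_childL]
          exact hnotin
        have := (hint i₀ hi₀int).2 hni
        rw [hEsplit, hDeq]
        omega
      · -- easy cases : m ≥ 2 or s ≥ 2
        rw [hEsplit]
        omega
    · -- the root line is not in L
      have hcard : L.card ≤ C := by
        have hsubset : L ⊆ Finset.univ.biUnion
            fun i : Fin ts.length => (childL (i : ℕ)).image ((i : ℕ) :: ·) := by
          intro p hp
          cases p with
          | nil => exact absurd hp h0
          | cons j q =>
            obtain ⟨hj, -⟩ := hL_shape j q hp
            exact Finset.mem_biUnion.mpr ⟨⟨j, hj⟩, Finset.mem_univ _,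
              Finset.mem_image.mpr ⟨q, (mem_childL j q).mpr hp, rfl⟩⟩
        calc L.card ≤ _ := Finset.card_le_card hsubset
          _ ≤ ∑ i : Fin ts.length, ((childL (i : ℕ)).image ((i : ℕ) :: ·)).card :=
            Finset.card_biUnion_le
          _ ≤ ∑ i : Fin ts.length, (childL (i : ℕ)).card :=
            Finset.sum_le_sum fun i _ => Finset.card_image_le
          _ = C := hCsplit
      rcases Nat.eq_zero_or_pos m with hm0 | hm1
      · obtain ⟨-, hC0, hD0⟩ := hzero hm0
        rw [hEsplit]
        constructor
        · omega
        · intro _; omega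
      · rw [hEsplit]
        constructor
        · omega
        · intro _; omega

/-- Lemma 3.5 of the paper: let `θ` be a (well-formed) labelled rooted tree whose
root is an internal node, and let `L₀` be a set of lines (identified with the
positions of the nodes they exit) such that:
* every line of `L₀` exits an internal node with degree label `1` and has
  nonzero momentum;
* for every internal node `v` of degree label `1` all of whose children are end
  nodes and whose exiting line has nonzero momentum (`v ∈ V̄₂(θ)`), the line
  exiting `v` is not in `L₀` (it is a 'resonant' line of `L₁(θ)`);
* for every internal node `v` of degree label `1` with exactly two children, one
  an end node and the other internal, such that both the line exiting `v` and
  the non-leaf line entering `v` have nonzero momentum (`v ∈ V̄₃(θ)`), at least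
  one of these two lines is not in `L₀` (it belongs to `L₁(θ,v) ≠ ∅`).
Then `4|L₀(θ)| ≤ 3|E(θ)| − 4`. -/
theorem stmt11 {d : ℕ} (θ : LTree d) (hwf : LTree.wf θ)
    (hroot : ¬ LTree.isLeaf θ)
    (L₀ : Finset (List ℕ))
    (hmem : ∀ p ∈ L₀, ∃ ts : List (LTree d),
      LTree.sub? θ p = some (LTree.node true ts) ∧ LTree.mom (LTree.node true ts) ≠ 0)
    (hV2 : ∀ (p : List ℕ) (ts : List (LTree d)),
      LTree.sub? θ p = some (LTree.node true ts) →
      (∀ t ∈ ts, LTree.isLeaf t) →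
      LTree.mom (LTree.node true ts) ≠ 0 → p ∉ L₀)
    (hV3 : ∀ (p : List ℕ) (ts : List (LTree d)) (i : ℕ) (t : LTree d),
      LTree.sub? θ p = some (LTree.node true ts) →
      ts.length = 2 →
      ts[i]? = some t → ¬ LTree.isLeaf t →
      (∀ (j : ℕ) (t' : LTree d), j ≠ i → ts[j]? = some t' → LTree.isLeaf t') →
      LTree.mom (LTree.node true ts) ≠ 0 → LTree.mom t ≠ 0 →
      ¬ (p ∈ L₀ ∧ p ++ [i] ∈ L₀)) :
    4 * L₀.card + 4 ≤ 3 * LTree.numLeaves θ := by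
  exact (LTree.main_bound (LTree.numLeaves θ) θ le_rfl hwf hroot L₀ hmem hV2 hV3).1
end
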